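/- For all r > 0 and ε > 0, every subsequence (n_k) of ℕ admits a further subsequence (n_{k_j}) such that, almost surely, limsup_{j→∞} ρ_{n_{k_j}}^{(r)} ≤ ρ_∞^{(r)} ≤ liminf_{j→∞} ρ_{n_{k_j}}^{(r+ε)}. -/

import Mathlib

open MeasureTheory Filter Set Topology

section helpers
variable {E : Type*} [NormedAddCommGroup E]

private lemma hit_bddBelow {T σω : ℝ} (hT : 0 ≤ T) (x : ℝ → E) (R : ℝ) :
    BddBelow ({t : ℝ | t ∈ Set.Ioo 0 σω ∧ R < ‖x t‖} ∪ {T}) := by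
  refine ⟨0, ?_⟩
  rintro t (⟨⟨h0, _⟩, _⟩ | rfl)
  · exact h0.le
  · exact hT

private lemma ρ_nonneg {T σω : ℝ} (hT : 0 ≤ T) (x : ℝ → E) (R : ℝ) :
    0 ≤ sInf ({t : ℝ | t ∈ Set.Ioo 0 σω ∧ R < ‖x t‖} ∪ {T}) := by
  refine le_csInf ⟨T, Or.inr rfl⟩ ?_
  rintro t (⟨⟨h0, _⟩, _⟩ | rfl)
  · exact h0.le
  · exact hT

private lemma ρ_le_T {T σω : ℝ} (hT : 0 ≤ T) (x : ℝ → E) (R : ℝ) :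
    sInf ({t : ℝ | t ∈ Set.Ioo 0 σω ∧ R < ‖x t‖} ∪ {T}) ≤ T :=
  csInf_le (hit_bddBelow hT x R) (Or.inr rfl)

private lemma ρ_le_mem {T σω : ℝ} (hT : 0 ≤ T) (x : ℝ → E) (R : ℝ) {t : ℝ}
    (ht : t ∈ Set.Ioo 0 σω) (hn : R < ‖x t‖) :
    sInf ({t : ℝ | t ∈ Set.Ioo 0 σω ∧ R < ‖x t‖} ∪ {T}) ≤ t :=
  csInf_le (hit_bddBelow hT x R) (Or.inl ⟨ht, hn⟩)

private lemma ρ_mono {T σω : ℝ} (hT : 0 ≤ T) (x : ℝ → E) {R R' : ℝ} (h : R ≤ R') :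
    sInf ({t : ℝ | t ∈ Set.Ioo 0 σω ∧ R < ‖x t‖} ∪ {T}) ≤
      sInf ({t : ℝ | t ∈ Set.Ioo 0 σω ∧ R' < ‖x t‖} ∪ {T}) := by
  refine csInf_le_csInf (hit_bddBelow hT x R) ⟨T, Or.inr rfl⟩ ?_
  rintro t (⟨ht, hn⟩ | rfl)
  · exact Or.inl ⟨ht, lt_of_le_of_lt h hn⟩
  · exact Or.inr rfl

private lemma ρ_exists_mem_lt {T σω : ℝ} (hT : 0 ≤ T) (x : ℝ → E) (R : ℝ) {c : ℝ}
    (hc : sInf ({t : ℝ | t ∈ Set.Ioo 0 σω ∧ R < ‖x t‖} ∪ {T}) < c) (hcT : c ≤ T) :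
    ∃ s, s ∈ Set.Ioo 0 σω ∧ R < ‖x s‖ ∧ s < c := by
  obtain ⟨a, ha, hac⟩ := exists_lt_of_csInf_lt ⟨T, Or.inr rfl⟩ hc
  rcases ha with h | h
  · exact ⟨a, h.1, h.2, hac⟩
  · rw [Set.mem_singleton_iff] at h
    exact absurd (h ▸ hac) (not_lt.mpr hcT)

/-- either `ρ < σ`, or `ρ = T` and `σ = T`. Uses the explosion property. -/
private lemma ρ_cases {T σω : ℝ} (hσ : σω ∈ Set.Ioc 0 T) (x : ℝ → E)
    (hexpl : σω < T → ∀ M : ℝ, ∃ᶠ t in nhdsWithin σω (Set.Iio σω), M < ‖x t‖) (R : ℝ) :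
    sInf ({t : ℝ | t ∈ Set.Ioo 0 σω ∧ R < ‖x t‖} ∪ {T}) < σω ∨
      (sInf ({t : ℝ | t ∈ Set.Ioo 0 σω ∧ R < ‖x t‖} ∪ {T}) = T ∧ σω = T) := by
  by_cases hS : ({t : ℝ | t ∈ Set.Ioo 0 σω ∧ R < ‖x t‖}).Nonempty
  · obtain ⟨t0, ht0⟩ := hS
    exact Or.inl (lt_of_le_of_lt (csInf_le (hit_bddBelow (le_trans hσ.1.le hσ.2) x R)
      (Or.inl ht0)) ht0.1.2)
  · have hσT : σω = T := by
      by_contra h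
      have hlt : σω < T := lt_of_le_of_ne hσ.2 h
      have hmem : Set.Ioo 0 σω ∈ nhdsWithin σω (Set.Iio σω) := by
        rw [show Set.Ioo 0 σω = Set.Ioi 0 ∩ Set.Iio σω from rfl]
        exact Filter.inter_mem (nhdsWithin_le_nhds (Ioi_mem_nhds hσ.1)) self_mem_nhdsWithin
      obtain ⟨t, hR, ht⟩ := ((hexpl hlt R).and_eventually (eventually_mem_set.2 hmem)).exists
      exact hS ⟨t, ht, hR⟩
    refine Or.inr ⟨?_, hσT⟩
    rw [Set.not_nonempty_iff_eq_empty.mp hS, Set.empty_union, csInf_singleton]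

/-- If `ρ < T` then the norm at `ρ` is at least `R`. -/
private lemma ρ_norm_ge {T σω : ℝ} (hσ : σω ∈ Set.Ioc 0 T) (x : ℝ → E)
    (hcont : ContinuousOn x (Set.Ico 0 σω))
    (hexpl : σω < T → ∀ M : ℝ, ∃ᶠ t in nhdsWithin σω (Set.Iio σω), M < ‖x t‖) (R : ℝ)
    (hlt : sInf ({t : ℝ | t ∈ Set.Ioo 0 σω ∧ R < ‖x t‖} ∪ {T}) < T) :
    R ≤ ‖x (sInf ({t : ℝ | t ∈ Set.Ioo 0 σω ∧ R < ‖x t‖} ∪ {T}))‖ := by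
  have hT : (0:ℝ) ≤ T := le_trans hσ.1.le hσ.2
  set q := sInf ({t : ℝ | t ∈ Set.Ioo 0 σω ∧ R < ‖x t‖} ∪ {T}) with hq
  have hq0 : 0 ≤ q := ρ_nonneg hT x R
  have hqσ : q < σω := by
    rcases ρ_cases hσ x hexpl R with h | h
    · exact h
    · exact absurd h.1 (ne_of_lt hlt)
  -- choose a sequence in the hitting set converging to q from above
  have hex : ∀ m : ℕ, ∃ s, s ∈ Set.Ioo 0 σω ∧ R < ‖x s‖ ∧ s < min (q + 1 / (m + 1)) T := by
    intro m
    refine ρ_exists_mem_lt hT x R ?_ (min_le_right _ _)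
    refine lt_min ?_ hlt
    have : (0:ℝ) < 1 / (m + 1) := by positivity
    linarith
  choose s hs1 hs2 hs3 using hex
  have hqs : ∀ m, q ≤ s m := fun m => ρ_le_mem hT x R (hs1 m) (hs2 m)
  have hsle : ∀ m, s m ≤ q + 1 / (m + 1) := fun m => ((lt_min_iff.mp (hs3 m)).1).le
  have htend : Tendsto s atTop (𝓝 q) := by
    have h1 : Tendsto (fun m : ℕ => q + 1 / ((m:ℝ) + 1)) atTop (𝓝 q) := by
      have := tendsto_one_div_add_atTop_nhds_zero_nat (𝕜 := ℝ)
      simpa using tendsto_const_nhds.add this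
    exact tendsto_of_tendsto_of_tendsto_of_le_of_le tendsto_const_nhds h1 hqs hsle
  have hcw : ContinuousWithinAt x (Set.Ico 0 σω) q := hcont q ⟨hq0, hqσ⟩
  have htend2 : Tendsto (fun m => x (s m)) atTop (𝓝 (x q)) := by
    refine hcw.tendsto.comp (tendsto_nhdsWithin_iff.mpr ⟨htend, ?_⟩)
    exact Filter.Eventually.of_forall fun m => ⟨(hs1 m).1.le, (hs1 m).2⟩
  have hn := (continuous_norm.tendsto (x q)).comp htend2
  exact ge_of_tendsto hn (Filter.Eventually.of_forall fun m => (hs2 m).le)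

/-- If the norm at time `0` exceeds `R` then `ρ = 0`. -/
private lemma ρ_eq_zero {T σω : ℝ} (hσ : σω ∈ Set.Ioc 0 T) (x : ℝ → E)
    (hcont : ContinuousOn x (Set.Ico 0 σω)) (R : ℝ) (h0 : R < ‖x 0‖) :
    sInf ({t : ℝ | t ∈ Set.Ioo 0 σω ∧ R < ‖x t‖} ∪ {T}) = 0 := by
  have hT : (0:ℝ) ≤ T := le_trans hσ.1.le hσ.2
  refine le_antisymm ?_ (ρ_nonneg hT x R)
  have hcw : ContinuousWithinAt x (Set.Ico 0 σω) 0 := hcont 0 ⟨le_refl 0, hσ.1⟩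
  have hmem : {y : E | R < ‖y‖} ∈ 𝓝 (x 0) :=
    (isOpen_lt continuous_const continuous_norm).mem_nhds h0
  have hpre : x ⁻¹' {y : E | R < ‖y‖} ∈ nhdsWithin 0 (Set.Ico 0 σω) := hcw hmem
  rw [Metric.mem_nhdsWithin_iff] at hpre
  obtain ⟨η, hη, hball⟩ := hpre
  by_contra hc
  push_neg at hc
  set q := sInf ({t : ℝ | t ∈ Set.Ioo 0 σω ∧ R < ‖x t‖} ∪ {T}) with hqdef
  set t := min (min η σω) q / 2 with htdef
  have ht0 : 0 < t := by
    have := lt_min (lt_min hη hσ.1) hc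
    positivity
  have hminη : min (min η σω) q ≤ η := le_trans (min_le_left _ _) (min_le_left _ _)
  have hminσ : min (min η σω) q ≤ σω := le_trans (min_le_left _ _) (min_le_right _ _)
  have hminq : min (min η σω) q ≤ q := min_le_right _ _
  have htη : t < η := by rw [htdef]; linarith
  have htσ : t < σω := by rw [htdef]; linarith
  have htq : t < q := by rw [htdef]; linarith
  have htmem : t ∈ Metric.ball (0:ℝ) η ∩ Set.Ico 0 σω := by
    constructor
    · rw [Metric.mem_ball, Real.dist_eq, sub_zero, abs_of_pos ht0]; exact htη
    · exact ⟨ht0.le, htσ⟩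
  have hRt : R < ‖x t‖ := hball htmem
  have : q ≤ t := ρ_le_mem hT x R ⟨ht0, htσ⟩ hRt
  exact absurd htq (not_lt.mpr this)

end helpers

theorem stmt_2
    {Ω : Type*} [MeasurableSpace Ω] (P : Measure Ω) [IsProbabilityMeasure P]
    {E : Type*} [NormedAddCommGroup E] [NormedSpace ℝ E] [CompleteSpace E]
    [MeasurableSpace E] [BorelSpace E]
    (T : ℝ) (hT : 0 < T)
    -- the explosion times σ_n (n ∈ ℕ) and σ_∞
    (σ : ℕ → Ω → ℝ) (σi : Ω → ℝ)
    (hσmeas : ∀ n, Measurable (σ n)) (hσimeas : Measurable σi)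
    (hσmem : ∀ n ω, σ n ω ∈ Set.Ioc 0 T) (hσimem : ∀ ω, σi ω ∈ Set.Ioc 0 T)
    -- the processes X_n (n ∈ ℕ) and X_∞, jointly measurable
    (X : ℕ → ℝ → Ω → E) (Xi : ℝ → Ω → E)
    (hXmeas : ∀ n, Measurable fun p : ℝ × Ω => X n p.1 p.2)
    (hXimeas : Measurable fun p : ℝ × Ω => Xi p.1 p.2)
    -- path continuity on [0, σ_n(ω)), and on [0,T] if σ_n(ω) = T
    (hXcont : ∀ n ω, ContinuousOn (fun t => X n t ω) (Set.Ico 0 (σ n ω)))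
    (hXcontT : ∀ n ω, σ n ω = T → ContinuousOn (fun t => X n t ω) (Set.Icc 0 T))
    (hXicont : ∀ ω, ContinuousOn (fun t => Xi t ω) (Set.Ico 0 (σi ω)))
    (hXicontT : ∀ ω, σi ω = T → ContinuousOn (fun t => Xi t ω) (Set.Icc 0 T))
    -- σ_n is an explosion time: on {σ_n < T}, limsup_{t ↑ σ_n} ‖X_n(t)‖ = ∞
    (hexpl : ∀ n ω, σ n ω < T →
      ∀ M : ℝ, ∃ᶠ t in nhdsWithin (σ n ω) (Set.Iio (σ n ω)), M < ‖X n t ω‖)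
    (hexpli : ∀ ω, σi ω < T →
      ∀ M : ℝ, ∃ᶠ t in nhdsWithin (σi ω) (Set.Iio (σi ω)), M < ‖Xi t ω‖)
    -- the stopping times ρ_n^{(r)} = inf { t ∈ (0, σ_n) : ‖X_n(t)‖ > r }, inf ∅ := T
    (ρ : ℕ → ℝ → Ω → ℝ) (ρi : ℝ → Ω → ℝ)
    (hρ : ∀ n r ω, ρ n r ω = sInf ({t : ℝ | t ∈ Set.Ioo 0 (σ n ω) ∧ r < ‖X n t ω‖} ∪ {T}))
    (hρi : ∀ r ω, ρi r ω = sInf ({t : ℝ | t ∈ Set.Ioo 0 (σi ω) ∧ r < ‖Xi t ω‖} ∪ {T}))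
    -- the globally defined processes X_n^{(r)} (denoted Y n r) and X_∞^{(r)} (denoted Yi r)
    (Y : ℕ → ℝ → ℝ → Ω → E) (Yi : ℝ → ℝ → Ω → E)
    (hYmeas : ∀ n r, Measurable fun p : ℝ × Ω => Y n r p.1 p.2)
    (hYimeas : ∀ r, Measurable fun p : ℝ × Ω => Yi r p.1 p.2)
    (hYcont : ∀ n r ω, Continuous fun t => Y n r t ω)
    (hYicont : ∀ r ω, Continuous fun t => Yi r t ω)
    -- assumption (a)
    (ha : ∀ n r, 0 < r → ∀ᵐ ω ∂P, ∀ t ∈ Set.Icc 0 (ρ n r ω), Y n r t ω = X n t ω)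
    (hai : ∀ r, 0 < r → ∀ᵐ ω ∂P, ∀ t ∈ Set.Icc 0 (ρi r ω), Yi r t ω = Xi t ω)
    -- assumption (b): X_n^{(r)} → X_∞^{(r)} in L⁰(Ω; C([0,T]; E))
    (hb : ∀ r, 0 < r → TendstoInMeasure P
      (fun n ω => ⨆ t : Set.Icc (0:ℝ) T, ‖Y n r (t : ℝ) ω - Yi r (t : ℝ) ω‖)
      atTop (fun _ => (0 : ℝ)))    :
    ∀ r > (0:ℝ), ∀ ε > (0:ℝ), ∀ n : ℕ → ℕ, StrictMono n →
      ∃ k : ℕ → ℕ, StrictMono k ∧ ∀ᵐ ω ∂P,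
        limsup (fun j => ρ (n (k j)) r ω) atTop ≤ ρi r ω ∧
        ρi r ω ≤ liminf (fun j => ρ (n (k j)) (r + ε) ω) atTop := by
  intro r hr ε hε n hn
  have hT0 : (0:ℝ) ≤ T := hT.le
  have hrε : (0:ℝ) < r + ε := by linarith
  have hbn : TendstoInMeasure P
      (fun j ω => ⨆ t : Set.Icc (0:ℝ) T, ‖Y (n j) (r+ε) (t:ℝ) ω - Yi (r+ε) (t:ℝ) ω‖)
      atTop (fun _ => (0:ℝ)) := fun δ hδ => (hb (r+ε) hrε δ hδ).comp hn.tendsto_atTop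
  obtain ⟨k, hk, hae⟩ := hbn.exists_seq_tendsto_ae
  refine ⟨k, hk, ?_⟩
  have haeA : ∀ᵐ ω ∂P, ∀ j : ℕ, ∀ t ∈ Set.Icc 0 (ρ (n (k j)) (r+ε) ω),
      Y (n (k j)) (r+ε) t ω = X (n (k j)) t ω :=
    ae_all_iff.mpr fun j => ha (n (k j)) (r+ε) hrε
  filter_upwards [hae, haeA, hai (r+ε) hrε] with ω hsup hA hAi
  -- pointwise bound through the sup
  have hDle : ∀ (j : ℕ) (u : ℝ), 0 ≤ u → u ≤ T →
      ‖Y (n (k j)) (r+ε) u ω - Yi (r+ε) u ω‖ ≤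
        ⨆ t : Set.Icc (0:ℝ) T, ‖Y (n (k j)) (r+ε) (t:ℝ) ω - Yi (r+ε) (t:ℝ) ω‖ := by
    intro j u hu0 huT
    have hcont : Continuous fun t : Set.Icc (0:ℝ) T =>
        ‖Y (n (k j)) (r+ε) (t:ℝ) ω - Yi (r+ε) (t:ℝ) ω‖ :=
      (((hYcont _ _ ω).sub (hYicont _ ω)).norm).comp continuous_subtype_val
    exact le_ciSup (isCompact_range hcont).bddAbove ⟨u, hu0, huT⟩
  -- basic bounds on the stopping times
  have hρm0 : ∀ (j : ℕ) (R : ℝ), 0 ≤ ρ (n (k j)) R ω := by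
    intro j R; rw [hρ (n (k j)) R ω]; exact ρ_nonneg hT0 _ R
  have hρmT : ∀ (j : ℕ) (R : ℝ), ρ (n (k j)) R ω ≤ T := by
    intro j R; rw [hρ (n (k j)) R ω]; exact ρ_le_T hT0 _ R
  have hρi0 : ∀ R : ℝ, 0 ≤ ρi R ω := by
    intro R; rw [hρi R ω]; exact ρ_nonneg hT0 _ R
  have hρiT : ∀ R : ℝ, ρi R ω ≤ T := by
    intro R; rw [hρi R ω]; exact ρ_le_T hT0 _ R
  have hρirq : ρi r ω ≤ ρi (r+ε) ω := by
    rw [hρi r ω, hρi (r+ε) ω]; exact ρ_mono hT0 _ (by linarith)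
  constructor
  · -- limsup ≤ ρi r ω
    refine le_of_forall_pos_le_add fun δ hδ => ?_
    refine Filter.limsup_le_of_le (isCoboundedUnder_le_of_le atTop fun j => hρm0 j r) ?_
    by_cases hρirT : ρi r ω < T
    · -- find a hitting point s for the limit path just below ρi r + δ
      have hlt2 : sInf ({t : ℝ | t ∈ Set.Ioo 0 (σi ω) ∧ r < ‖Xi t ω‖} ∪ {T})
          < min (ρi r ω + δ) T := by
        rw [← hρi r ω]; exact lt_min (by linarith) hρirT
      obtain ⟨s, hsmem, hsnorm, hslt⟩ := ρ_exists_mem_lt hT0 _ r hlt2 (min_le_right _ _)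
      have hsρδ : s < ρi r ω + δ := lt_of_lt_of_le hslt (min_le_left _ _)
      have hsT : s < T := lt_of_lt_of_le hsmem.2 (hσimem ω).2
      by_cases hq0 : ρi (r+ε) ω = 0
      · -- corner case: the limit path already exceeds r + ε at time 0
        have hXi0 : r + ε ≤ ‖Xi 0 ω‖ := by
          have h0 : r + ε ≤ ‖Xi (ρi (r+ε) ω) ω‖ := by
            rw [hρi (r+ε) ω]
            exact ρ_norm_ge (hσimem ω) _ (hXicont ω) (hexpli ω) (r+ε)
              (hρi (r+ε) ω ▸ (hq0 ▸ hT : ρi (r+ε) ω < T))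
          rwa [hq0] at h0
        have hYi0 : Yi (r+ε) 0 ω = Xi 0 ω := hAi 0 ⟨le_refl 0, hρi0 (r+ε)⟩
        filter_upwards [hsup.eventually_lt_const hε] with j hDj
        have h1 := hDle j 0 (le_refl 0) hT0
        have h5 := abs_le.mp (abs_norm_sub_norm_le (Y (n (k j)) (r+ε) 0 ω) (Yi (r+ε) 0 ω))
        have hnYi : ‖Yi (r+ε) 0 ω‖ = ‖Xi 0 ω‖ := by rw [hYi0]
        have h2 : r < ‖Y (n (k j)) (r+ε) 0 ω‖ := by linarith [h5.1]
        have h3 : Y (n (k j)) (r+ε) 0 ω = X (n (k j)) 0 ω := hA j 0 ⟨le_refl 0, hρm0 j (r+ε)⟩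
        have h4 : ρ (n (k j)) r ω = 0 := by
          rw [hρ (n (k j)) r ω]
          exact ρ_eq_zero (hσmem _ ω) _ (hXcont _ ω) r (h3 ▸ h2)
        rw [h4]
        linarith [hρi0 r]
      · -- main case
        have hq0' : 0 < ρi (r+ε) ω := lt_of_le_of_ne (hρi0 (r+ε)) (Ne.symm hq0)
        set u := min s (ρi (r+ε) ω) with hudef
        have hu0 : 0 < u := lt_min hsmem.1 hq0'
        have huq : u ≤ ρi (r+ε) ω := min_le_right _ _
        have hus : u ≤ s := min_le_left _ _
        have huT : u < T := lt_of_le_of_lt hus hsT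
        have hXiu : r < ‖Xi u ω‖ := by
          rcases le_total s (ρi (r+ε) ω) with hsq | hqs
          · rw [hudef, min_eq_left hsq]; exact hsnorm
          · have hqT : ρi (r+ε) ω < T := lt_of_le_of_lt hqs hsT
            have h0 : r + ε ≤ ‖Xi (ρi (r+ε) ω) ω‖ := by
              rw [hρi (r+ε) ω]
              exact ρ_norm_ge (hσimem ω) _ (hXicont ω) (hexpli ω) (r+ε) (hρi (r+ε) ω ▸ hqT)
            rw [hudef, min_eq_right hqs]
            linarith
        have hθ : (0:ℝ) < ‖Xi u ω‖ - r := by linarith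
        have hYiu : Yi (r+ε) u ω = Xi u ω := hAi u ⟨hu0.le, huq⟩
        filter_upwards [hsup.eventually_lt_const hθ] with j hDj
        have h1 := hDle j u hu0.le huT.le
        have h5 := abs_le.mp (abs_norm_sub_norm_le (Y (n (k j)) (r+ε) u ω) (Yi (r+ε) u ω))
        have hnYi : ‖Yi (r+ε) u ω‖ = ‖Xi u ω‖ := by rw [hYiu]
        have h2 : r < ‖Y (n (k j)) (r+ε) u ω‖ := by linarith [h5.1]
        by_cases hcase : u ≤ ρ (n (k j)) (r+ε) ω
        · have h3 : Y (n (k j)) (r+ε) u ω = X (n (k j)) u ω := hA j u ⟨hu0.le, hcase⟩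
          have hcases : ρ (n (k j)) (r+ε) ω < σ (n (k j)) ω ∨
              (ρ (n (k j)) (r+ε) ω = T ∧ σ (n (k j)) ω = T) := by
            rw [hρ (n (k j)) (r+ε) ω]
            exact ρ_cases (hσmem _ ω) _ (hexpl _ ω) (r+ε)
          have hσcase : u < σ (n (k j)) ω := by
            rcases hcases with h | h
            · exact lt_of_le_of_lt hcase h
            · rw [h.2]; exact huT
          have hle : ρ (n (k j)) r ω ≤ u := by
            rw [hρ (n (k j)) r ω]
            exact ρ_le_mem hT0 _ r ⟨hu0, hσcase⟩ (h3 ▸ h2)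
          linarith
        · push_neg at hcase
          have hmono : ρ (n (k j)) r ω ≤ ρ (n (k j)) (r+ε) ω := by
            rw [hρ (n (k j)) r ω, hρ (n (k j)) (r+ε) ω]
            exact ρ_mono hT0 _ (by linarith)
          linarith
    · -- ρi r ω = T, trivial
      have hEq : ρi r ω = T := le_antisymm (hρiT r) (not_lt.mp hρirT)
      exact Filter.Eventually.of_forall fun j => by rw [hEq]; linarith [hρmT j r]
  · -- ρi r ω ≤ liminf of ρ at level r + ε
    refine le_of_forall_lt fun c hc => ?_
    have hcc' : c < (c + ρi r ω) / 2 := by linarith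
    have hc'ρ : (c + ρi r ω) / 2 < ρi r ω := by linarith
    refine lt_of_lt_of_le hcc' (Filter.le_liminf_of_le
      (isCoboundedUnder_ge_of_le atTop fun j => hρmT j (r+ε)) ?_)
    have hρirσ : ρi r ω ≤ σi ω := by
      have hcasesi : ρi r ω < σi ω ∨ (ρi r ω = T ∧ σi ω = T) := by
        rw [hρi r ω]
        exact ρ_cases (hσimem ω) _ (hexpli ω) r
      rcases hcasesi with h | h
      · exact h.le
      · rw [h.1, h.2]
    filter_upwards [hsup.eventually_lt_const (half_pos hε)] with j hDj
    by_contra hcon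
    push_neg at hcon
    have hpρ : ρ (n (k j)) (r+ε) ω < ρi r ω := lt_trans hcon hc'ρ
    have hpT : ρ (n (k j)) (r+ε) ω < T := lt_of_lt_of_le hpρ (hρiT r)
    have hXp : r + ε ≤ ‖X (n (k j)) (ρ (n (k j)) (r+ε) ω) ω‖ := by
      rw [hρ (n (k j)) (r+ε) ω]
      exact ρ_norm_ge (hσmem _ ω) _ (hXcont _ ω) (hexpl _ ω) (r+ε)
        (hρ (n (k j)) (r+ε) ω ▸ hpT)
    have hYp : Y (n (k j)) (r+ε) (ρ (n (k j)) (r+ε) ω) ω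
        = X (n (k j)) (ρ (n (k j)) (r+ε) ω) ω :=
      hA j _ ⟨hρm0 j (r+ε), le_refl _⟩
    have h1 := hDle j (ρ (n (k j)) (r+ε) ω) (hρm0 j (r+ε)) (hρmT j (r+ε))
    have h5 := abs_le.mp (abs_norm_sub_norm_le
      (Y (n (k j)) (r+ε) (ρ (n (k j)) (r+ε) ω) ω) (Yi (r+ε) (ρ (n (k j)) (r+ε) ω) ω))
    have hnY : ‖Y (n (k j)) (r+ε) (ρ (n (k j)) (r+ε) ω) ω‖
        = ‖X (n (k j)) (ρ (n (k j)) (r+ε) ω) ω‖ := by rw [hYp]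
    have hAi_p : Yi (r+ε) (ρ (n (k j)) (r+ε) ω) ω = Xi (ρ (n (k j)) (r+ε) ω) ω :=
      hAi _ ⟨hρm0 j (r+ε), le_trans hpρ.le hρirq⟩
    have hXip : r < ‖Xi (ρ (n (k j)) (r+ε) ω) ω‖ := by
      rw [← hAi_p]; linarith [h5.2]
    rcases eq_or_lt_of_le (hρm0 j (r+ε)) with hp0 | hp0
    · have hzero : ρi r ω = 0 := by
        rw [hρi r ω]
        refine ρ_eq_zero (hσimem ω) _ (hXicont ω) r ?_
        rwa [← hp0] at hXip
      linarith
    · have hpσ : ρ (n (k j)) (r+ε) ω < σi ω := lt_of_lt_of_le hpρ hρirσ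
      have : ρi r ω ≤ ρ (n (k j)) (r+ε) ω := by
        rw [hρi r ω]
        exact ρ_le_mem hT0 _ r ⟨hp0, hpσ⟩ hXip
      linarith
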